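/- For real α, β, γ₁, γ₂ with β ≠ 0 and integers 0 ≤ k ≤ n: S(n,k;α,β,γ₁+γ₂) = Σ_{s=k}^{n} C(n,s) · (γ₂|α)_{n-s} · S(s,k;α,β,γ₁), where S denotes the Hsu–Shiue generalized Stirling numbers and (t|α)_m = Π_{j=0}^{m-1}(t-jα). -/

import Mathlib

open Finset
open Polynomial

/-- Generalized factorial polynomial `(t|α)_n = ∏_{j=0}^{n-1} (t - jα)`. -/
noncomputable def gfact (t α : ℝ) (n : ℕ) : ℝ := ∏ j ∈ Finset.range n, (t - j * α)

/-- Hsu–Shiue generalized Stirling numbers (explicit formula, β ≠ 0). -/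
noncomputable def HS (n k : ℕ) (α β γ : ℝ) : ℝ :=
  (1 / (β ^ k * (Nat.factorial k : ℝ))) *
    ∑ s ∈ Finset.range (k + 1), (-1 : ℝ) ^ (k - s) * (Nat.choose k s : ℝ) * gfact (β * s + γ) α n

/-- Second-type higher order generalized geometric polynomials. -/
noncomputable def A (lam : ℕ) (x : ℝ) (n : ℕ) (α β γ : ℝ) : ℝ :=
  ∑ k ∈ Finset.range (n + 1),
    (Nat.choose (k + lam - 1) k : ℝ) * (-1 : ℝ) ^ (n + k) * β ^ k * (Nat.factorial k : ℝ) *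
      HS n k α (-β) (-γ) * x ^ k

lemma gfact_succ (t α : ℝ) (n : ℕ) : gfact t α (n+1) = gfact t α n * (t - n * α) := by
  simp [gfact, Finset.prod_range_succ]

/-- Vandermonde identity for the generalized factorial. -/
lemma gfact_add (α x y : ℝ) (n : ℕ) :
    gfact (x + y) α n =
      ∑ s ∈ range (n+1), (n.choose s : ℝ) * gfact x α s * gfact y α (n - s) := by
  induction n with
  | zero => simp [gfact]
  | succ n ih =>
    set F : ℕ → ℝ := fun s => (n.choose s : ℝ) * gfact x α (s+1) * gfact y α (n-s) with hF
    set G : ℕ → ℝ := fun s => (n.choose s : ℝ) * gfact x α s * gfact y α (n+1-s) with hG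
    have step1 : gfact (x+y) α (n+1) = ∑ s ∈ range (n+1), (F s + G s) := by
      rw [gfact_succ, ih, Finset.sum_mul]
      apply Finset.sum_congr rfl
      intro s hs
      rw [mem_range, Nat.lt_succ_iff] at hs
      rw [hF, hG]
      simp only
      rw [show n + 1 - s = (n - s) + 1 by omega, gfact_succ, gfact_succ]
      have hcast : ((n - s : ℕ) : ℝ) = (n : ℝ) - s := by rw [Nat.cast_sub hs]
      rw [hcast]; ring
    rw [step1, Finset.sum_add_distrib]
    have hH : ∑ s ∈ range (n+2), ((n+1).choose s : ℝ) * gfact x α s * gfact y α (n+1-s)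
        = ∑ s ∈ range (n+1), F s + ∑ s ∈ range (n+1), G s := by
      rw [Finset.sum_range_succ' (fun s => ((n+1).choose s : ℝ) * gfact x α s * gfact y α (n+1-s)) (n+1)]
      have e1 : ∀ s ∈ range (n+1),
          ((n+1).choose (s+1) : ℝ) * gfact x α (s+1) * gfact y α (n+1-(s+1))
          = F s + G (s+1) := by
        intro s hs
        rw [Nat.choose_succ_succ, Nat.cast_add, hF, hG]
        simp only
        rw [show n + 1 - (s+1) = n - s by omega]
        ring
      rw [Finset.sum_congr rfl e1, Finset.sum_add_distrib]
      have e2 : ((n+1).choose 0 : ℝ) * gfact x α 0 * gfact y α (n+1-0) = G 0 := by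
        simp [hG, gfact]
      rw [e2, add_assoc, ← Finset.sum_range_succ' G (n+1), Finset.sum_range_succ G (n+1)]
      have : G (n+1) = 0 := by simp [hG, Nat.choose_eq_zero_of_lt]
      rw [this, add_zero]
    rw [hH]


lemma taylor_one_sub_degree_lt (p : ℝ[X]) (hp : p ≠ 0) :
    ((Polynomial.taylor 1 p) - p).degree < p.degree := by
  have hdeg : (Polynomial.taylor 1 p).degree = p.degree := by
    rw [Polynomial.degree_eq_natDegree hp, Polynomial.degree_eq_iff_natDegree_eq]
    · exact Polynomial.natDegree_taylor p 1
    · intro h; apply hp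
      have := Polynomial.taylor_injective (1:ℝ) (a₁ := p) (a₂ := 0) (by simpa using h)
      exact this
  have hlc : (Polynomial.taylor 1 p).leadingCoeff = p.leadingCoeff := by
    rw [Polynomial.leadingCoeff, Polynomial.leadingCoeff, Polynomial.natDegree_taylor,
      Polynomial.taylor_coeff]
    set d := p.natDegree
    have hd : (Polynomial.hasseDeriv d p).natDegree ≤ 0 := by
      have := Polynomial.natDegree_hasseDeriv_le p d
      omega
    rw [Polynomial.eq_C_of_natDegree_le_zero hd, Polynomial.eval_C,
      Polynomial.hasseDeriv_coeff]
    simp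
  calc ((Polynomial.taylor 1 p) - p).degree < (Polynomial.taylor 1 p).degree :=
        Polynomial.degree_sub_lt hdeg (fun h => hp (Polynomial.taylor_injective (1:ℝ) (a₁ := p) (a₂ := 0) (by simpa using h))) hlc
    _ = p.degree := hdeg

lemma altsum_eval_eq_zero : ∀ (k : ℕ) (p : ℝ[X]), p.degree < k →
    ∑ s ∈ range (k+1), (-1:ℝ)^(k-s) * (k.choose s : ℝ) * p.eval (s : ℝ) = 0 := by
  intro k
  induction k with
  | zero =>
    intro p hp
    have : p = 0 := by
      rw [← Polynomial.degree_eq_bot]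
      exact Nat.WithBot.lt_zero_iff.mp (by exact_mod_cast hp)
    simp [this]
  | succ k ih =>
    intro p hp
    by_cases h0 : p = 0
    · simp [h0]
    set q : ℝ[X] := (Polynomial.taylor 1 p) - p with hq
    have hqd : q.degree < k := by
      have h1 := taylor_one_sub_degree_lt p h0
      have h2 : p.degree ≤ (k : WithBot ℕ) := by
        rw [Polynomial.degree_eq_natDegree h0] at hp ⊢
        exact_mod_cast Nat.lt_succ_iff.mp (by exact_mod_cast hp)
      exact lt_of_lt_of_le h1 h2
    have key := ih q hqd
    have hqe : ∀ s : ℕ, q.eval (s : ℝ) = p.eval ((s : ℝ) + 1) - p.eval (s : ℝ) := by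
      intro s
      rw [hq]
      simp [Polynomial.taylor_apply, Polynomial.eval_comp, add_comm]
    -- rewrite the (k+1)-sum
    rw [Finset.sum_range_succ' (fun s => (-1:ℝ)^(k+1-s) * ((k+1).choose s : ℝ) * p.eval (s : ℝ)) (k+1)]
    have e1 : ∀ s ∈ range (k+1),
        (-1:ℝ)^(k+1-(s+1)) * ((k+1).choose (s+1) : ℝ) * p.eval ((s+1 : ℕ) : ℝ)
        = (-1:ℝ)^(k-s) * (k.choose s : ℝ) * p.eval ((s:ℝ)+1)
          + (-1:ℝ)^(k-s) * (k.choose (s+1) : ℝ) * p.eval ((s+1 : ℕ) : ℝ) := by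
      intro s hs
      rw [Nat.choose_succ_succ, Nat.cast_add, show k+1-(s+1) = k-s by omega]
      push_cast
      ring
    rw [Finset.sum_congr rfl e1, Finset.sum_add_distrib]
    have e2 : (-1:ℝ)^(k+1-0) * ((k+1).choose 0 : ℝ) * p.eval ((0:ℕ) : ℝ)
        = -((-1:ℝ)^(k-0) * (k.choose 0 : ℝ) * p.eval ((0:ℕ):ℝ)) := by
      simp [pow_succ]
    rw [e2]
    set G : ℕ → ℝ := fun s => (-1:ℝ)^(k-s) * (k.choose s : ℝ) * p.eval ((s:ℕ) : ℝ) with hG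
    have e3 : ∑ s ∈ range (k+1), (-1:ℝ)^(k-s) * (k.choose (s+1) : ℝ) * p.eval ((s+1 : ℕ) : ℝ)
        = -∑ s ∈ range (k+1), G (s+1) := by
      rw [← Finset.sum_neg_distrib]
      apply Finset.sum_congr rfl
      intro s hs
      rw [mem_range, Nat.lt_succ_iff] at hs
      rw [hG]
      simp only
      rcases Nat.lt_or_ge (s+1) (k+1) with h | h
      · rw [show k - s = (k - (s+1)) + 1 by omega, pow_succ]
        push_cast; ring
      · have hs1 : s = k := by omega
        subst hs1
        simp [Nat.choose_eq_zero_of_lt]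
    rw [e3]
    have e4 : ∑ s ∈ range (k+1), G (s+1) + G 0 = ∑ s ∈ range (k+1), G s := by
      rw [← Finset.sum_range_succ' G (k+1), Finset.sum_range_succ G (k+1), hG]
      simp [Nat.choose_eq_zero_of_lt]
    have e5 : ∑ s ∈ range (k+1), (-1:ℝ)^(k-s) * (k.choose s : ℝ) * p.eval ((s:ℝ)+1)
        = ∑ s ∈ range (k+1), (-1:ℝ)^(k-s) * (k.choose s : ℝ) * q.eval (s : ℝ)
          + ∑ s ∈ range (k+1), G s := by
      rw [← Finset.sum_add_distrib]
      apply Finset.sum_congr rfl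
      intro s _
      rw [hqe s, hG]
      ring
    calc ∑ s ∈ range (k+1), (-1:ℝ)^(k-s) * (k.choose s : ℝ) * p.eval ((s:ℝ)+1)
          + -∑ s ∈ range (k+1), G (s+1) + -G 0
        = ∑ s ∈ range (k+1), (-1:ℝ)^(k-s) * (k.choose s : ℝ) * p.eval ((s:ℝ)+1)
          - (∑ s ∈ range (k+1), G (s+1) + G 0) := by ring
      _ = ∑ s ∈ range (k+1), (-1:ℝ)^(k-s) * (k.choose s : ℝ) * q.eval (s : ℝ) := by
          rw [e4, e5]; ring
      _ = 0 := key

/-- `HS m k = 0` when `m < k`. -/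
lemma HS_eq_zero_of_lt (m k : ℕ) (α β γ : ℝ) (h : m < k) : HS m k α β γ = 0 := by
  have key : ∑ s ∈ range (k+1), (-1:ℝ)^(k-s) * (k.choose s : ℝ) * gfact (β * s + γ) α m = 0 := by
    set p : ℝ[X] := ∏ j ∈ range m, (Polynomial.C β * Polynomial.X + Polynomial.C (γ - j * α))
      with hp
    have hdeg : p.degree < k := by
      have h1 : p.natDegree ≤ m := by
        rw [hp]
        refine le_trans (Polynomial.natDegree_prod_le _ _) ?_
        refine le_trans (Finset.sum_le_sum (g := fun _ => 1) ?_) (by simp)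
        intro j _
        refine le_trans (Polynomial.natDegree_add_le _ _) ?_
        have h2 : (Polynomial.C β * Polynomial.X).natDegree ≤ 1 :=
          (Polynomial.natDegree_C_mul_le β Polynomial.X).trans (by simp)
        simp only [max_le_iff, Polynomial.natDegree_C]
        exact ⟨h2, by norm_num⟩
      calc p.degree ≤ (p.natDegree : WithBot ℕ) := Polynomial.degree_le_natDegree
        _ < (k : WithBot ℕ) := by exact_mod_cast lt_of_le_of_lt h1 h
    have heval : ∀ s : ℕ, p.eval (s : ℝ) = gfact (β * s + γ) α m := by
      intro s
      rw [hp, Polynomial.eval_prod, gfact]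
      apply Finset.prod_congr rfl
      intro j _
      simp
      ring
    have e : ∑ s ∈ range (k+1), (-1:ℝ)^(k-s) * (k.choose s : ℝ) * gfact (β * s + γ) α m
        = ∑ s ∈ range (k+1), (-1:ℝ)^(k-s) * (k.choose s : ℝ) * p.eval (s : ℝ) :=
      Finset.sum_congr rfl (fun s _ => by rw [heval s])
    rw [e]
    exact altsum_eval_eq_zero k p hdeg
  rw [HS, key, mul_zero]


theorem stmt1 (α β γ₁ γ₂ : ℝ) (hβ : β ≠ 0) (n k : ℕ) (hk : k ≤ n) :
    HS n k α β (γ₁ + γ₂) =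
      ∑ s ∈ Finset.Icc k n, (Nat.choose n s : ℝ) * gfact γ₂ α (n - s) * HS s k α β γ₁ := by
  have expand : HS n k α β (γ₁ + γ₂)
      = ∑ m ∈ range (n+1), (n.choose m : ℝ) * gfact γ₂ α (n - m) * HS m k α β γ₁ := by
    rw [HS]
    have e1 : ∀ s ∈ range (k+1),
        (-1:ℝ)^(k-s) * (k.choose s : ℝ) * gfact (β * s + (γ₁ + γ₂)) α n
        = ∑ m ∈ range (n+1), (n.choose m : ℝ) * gfact γ₂ α (n - m)
            * ((-1:ℝ)^(k-s) * (k.choose s : ℝ) * gfact (β * s + γ₁) α m) := by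
      intro s _
      rw [show β * s + (γ₁ + γ₂) = (β * s + γ₁) + γ₂ by ring, gfact_add, Finset.mul_sum]
      apply Finset.sum_congr rfl
      intro m _
      ring
    rw [Finset.sum_congr rfl e1]
    simp_rw [Finset.mul_sum]
    rw [Finset.sum_comm]
    apply Finset.sum_congr rfl
    intro m _
    rw [HS, Finset.mul_sum, Finset.mul_sum]
    apply Finset.sum_congr rfl
    intro s _
    ring
  rw [expand]
  rw [show range (n+1) = Finset.Icc 0 n by rw [Finset.range_eq_Ico, Nat.Ico_zero_eq_range]; ext x; simp [Nat.lt_succ_iff]]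
  rw [← Finset.sum_subset (Finset.Icc_subset_Icc_left (Nat.zero_le k))]
  intro m hm hnm
  simp only [Finset.mem_Icc] at hm hnm
  have : m < k := by omega
  rw [HS_eq_zero_of_lt m k α β γ₁ this, mul_zero]
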